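/- Let k be a field, and let A be a Noetherian commutative local k-algebra with maximal ideal m such that the composition k → A → A/m is an isomorphism (i.e., A has residue field k) and such that the intersection of the powers m^n over all n ≥ 1 is zero. Let G be a finite group acting on A by k-algebra automorphisms, and suppose the order of G is not divisible by the characteristic of k. If every element of G induces the identity map on the k-vector space m/m^2, then every element of G acts as the identity on A. -/

import Mathlib

open Finset IsLocalRing in
/-- Let `A` be a Noetherian commutative local `k`-algebra with maximal ideal `m`, residue
field `k` (i.e. the composition `k → A → A/m` is an isomorphism), and `⋂_{n ≥ 1} m^n = 0`.
Let `G` be a finite group of order not divisible by the characteristic of `k`, acting on `A`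
by `k`-algebra automorphisms. If every element of `G` induces the identity on `m/m²`, then
every element of `G` acts as the identity on `A`. -/
theorem fixed_tangent_action_trivial
    (k : Type*) [Field k] (A : Type*) [CommRing A] [IsNoetherianRing A]
    [Algebra k A] [IsLocalRing A]
    (hres : Function.Bijective (algebraMap k (A ⧸ IsLocalRing.maximalIdeal A)))
    (hint : ⨅ n : ℕ, IsLocalRing.maximalIdeal A ^ (n + 1) = ⊥)
    (G : Type*) [Group G] [Finite G]
    (ρ : G →* (A ≃ₐ[k] A))
    (hord : ¬ (ringChar k ∣ Nat.card G))
    (htan : ∀ g : G, ∀ x ∈ IsLocalRing.maximalIdeal A,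
      ρ g x - x ∈ (IsLocalRing.maximalIdeal A) ^ 2) :
    ∀ g : G, ∀ a : A, ρ g a = a := by
  intro g a
  set m : Ideal A := IsLocalRing.maximalIdeal A with hm
  set σ : A ≃ₐ[k] A := ρ g with hσ
  -- Step 1: `σ - id` maps `m^(j+1)` into `m^(j+2)`.
  have key : ∀ j : ℕ, ∀ x ∈ m ^ (j + 1), σ x - x ∈ m ^ (j + 2) := by
    intro j
    induction j with
    | zero =>
      intro x hx
      simpa using htan g x (by simpa using hx)
    | succ j ih =>
      intro x hx
      rw [pow_succ] at hx
      refine Submodule.mul_induction_on hx ?_ ?_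
      · intro r hr s hs
        have h1 : σ r - r ∈ m ^ (j + 2) := ih r hr
        have h2 : σ s - s ∈ m ^ 2 := htan g s hs
        have hs1 : s ∈ m ^ 1 := by simpa using hs
        have e : σ (r * s) - r * s
            = (σ r - r) * (σ s - s) + ((σ r - r) * s + r * (σ s - s)) := by
          rw [map_mul]; ring
        rw [e]
        refine add_mem ?_ (add_mem ?_ ?_)
        · have := Ideal.mul_mem_mul h1 h2
          rw [← pow_add] at this
          exact Ideal.pow_le_pow_right (by omega) this
        · have := Ideal.mul_mem_mul h1 hs1
          rw [← pow_add] at this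
          exact Ideal.pow_le_pow_right (by omega) this
        · have := Ideal.mul_mem_mul hr h2
          rw [← pow_add] at this
          exact Ideal.pow_le_pow_right (by omega) this
      · intro x y hx hy
        have e : σ (x + y) - (x + y) = (σ x - x) + (σ y - y) := by rw [map_add]; ring
        rw [e]; exact add_mem hx hy
  -- Step 2: `σ b - b ∈ m^2` for every `b`, using residue field `k`.
  have base : ∀ b : A, σ b - b ∈ m ^ 2 := by
    intro b
    obtain ⟨c, hc⟩ := hres.2 (Ideal.Quotient.mk m b)
    have hcb : b - algebraMap k A c ∈ m := by
      have h0 : Ideal.Quotient.mk m (b - algebraMap k A c) = 0 := by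
        rw [map_sub, ← hc]
        simp [Ideal.Quotient.algebraMap_eq]
      exact (Ideal.Quotient.eq_zero_iff_mem).mp h0
    have := htan g _ hcb
    simpa [map_sub, AlgEquiv.commutes] using this
  -- Step 3: operator identity `X·N + X²·q = 0` where `X = σ - id`.
  set N : ℕ := Nat.card G with hN
  have hNpos : 0 < N := Nat.card_pos
  set s : Module.End k A := σ.toLinearMap with hs
  have hpow : ∀ n : ℕ, ∀ b : A, (s ^ n) b = (σ ^ n) b := by
    intro n
    induction n with
    | zero => intro b; simp
    | succ n ih =>
      intro b
      rw [pow_succ, pow_succ, Module.End.mul_apply, ih, AlgEquiv.mul_apply]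
      simp [hs]
  have hsN : s ^ N = 1 := by
    ext b
    have hg : σ ^ N = 1 := by rw [hσ, ← map_pow, pow_card_eq_one', map_one]
    rw [hpow, hg]; rfl
  set X : Module.End k A := s - 1 with hX
  have hXapp : ∀ b : A, X b = σ b - b := by
    intro b; simp [hX, LinearMap.sub_apply, hs]
  set q : Module.End k A := ∑ i ∈ range (N - 1), X ^ i * (N.choose (i + 2) : Module.End k A)
    with hq
  have hbin : (1 : Module.End k A)
      = ∑ i ∈ range (N + 1), X ^ i * (N.choose i : Module.End k A) := by
    calc (1 : Module.End k A) = s ^ N := hsN.symm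
    _ = (X + 1) ^ N := by rw [hX, sub_add_cancel]
    _ = _ := by
        rw [(Commute.one_right X).add_pow]
        simp
  have hkey : X * (N : Module.End k A) + X ^ 2 * q = 0 := by
    have h1 : ∑ i ∈ range (N + 1), X ^ i * (N.choose i : Module.End k A)
        = (∑ i ∈ range (N - 1), X ^ (i + 1 + 1) * (N.choose (i + 1 + 1) : Module.End k A)
            + X ^ (0 + 1) * (N.choose (0 + 1) : Module.End k A))
          + X ^ 0 * (N.choose 0 : Module.End k A) := by
      rw [show N + 1 = (N - 1) + 1 + 1 by omega, Finset.sum_range_succ', Finset.sum_range_succ']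
    have h2 : ∑ i ∈ range (N - 1), X ^ (i + 1 + 1) * (N.choose (i + 1 + 1) : Module.End k A)
        = X ^ 2 * q := by
      rw [hq, Finset.mul_sum]
      refine Finset.sum_congr rfl fun i _ => ?_
      rw [← mul_assoc, ← pow_add]
      ring_nf
    rw [h1, h2] at hbin
    simp only [pow_zero, one_mul, Nat.choose_zero_right, Nat.cast_one, mul_one, zero_add,
      pow_one, Nat.choose_one_right] at hbin
    have h3 : X ^ 2 * q + X * (N : Module.End k A) = 0 := right_eq_add.mp hbin
    rw [add_comm] at h3
    exact h3
  -- elementwise form of the key identity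
  have hNk : (N : k) ≠ 0 := by
    intro h0
    exact hord ((CharP.cast_eq_zero_iff k (ringChar k) N).mp h0)
  have hElt : ∀ b : A, X b = (N : k)⁻¹ • (-(X (X (q b)))) := by
    intro b
    have h0 : (X * (N : Module.End k A) + X ^ 2 * q) b = (0 : Module.End k A) b := by
      rw [hkey]
    simp only [LinearMap.add_apply, Module.End.mul_apply, LinearMap.zero_apply,
      Module.End.natCast_apply, map_nsmul, pow_two] at h0
    have h1 : (N : k) • X b = -(X (X (q b))) := by
      rw [← Nat.cast_smul_eq_nsmul k] at h0
      exact eq_neg_of_add_eq_zero_left h0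
    rw [← h1, ← smul_assoc, smul_eq_mul, inv_mul_cancel₀ hNk, one_smul]
  -- Step 4: induction — `σ b - b ∈ m^(n+2)` for all `n`.
  have hind : ∀ n : ℕ, ∀ b : A, σ b - b ∈ m ^ (n + 2) := by
    intro n
    induction n with
    | zero => intro b; simpa using base b
    | succ n ih =>
      intro b
      have h1 : X (q b) ∈ m ^ (n + 2) := by rw [hXapp]; exact ih (q b)
      have h2 : X (X (q b)) ∈ m ^ (n + 3) := by
        rw [hXapp]
        exact key (n + 1) _ h1
      have h3 : (N : k)⁻¹ • (-(X (X (q b)))) ∈ m ^ (n + 3) :=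
        Submodule.smul_of_tower_mem _ _ (neg_mem h2)
      have := hElt b
      rw [hXapp] at this
      rw [this]
      exact h3
  -- Step 5: conclude using `⋂ m^(n+1) = ⊥`.
  have hbot : σ a - a ∈ (⊥ : Ideal A) := by
    rw [← hint]
    refine Submodule.mem_iInf _ |>.mpr fun n => ?_
    exact Ideal.pow_le_pow_right (by omega) (hind n a)
  have : σ a - a = 0 := by simpa using hbot
  have := sub_eq_zero.mp this
  simpa [hσ] using this
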